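/- arXiv:1612.02647 — 2 statements merged into one kernel-verified Lean document; each statement's English description precedes it below -/
import Mathlib

section
/- For a single square matrix M over Z_max, the spectral radius ρ(M) = lim_{n→∞} (1/n)‖M^n‖_∞ equals the maximal average weight of cycles in the graph of M: ρ(M) = max over ℓ ≥ 1 and indices i_1,…,i_ℓ of (1/ℓ)(M_{i_1,i_2} + M_{i_2,i_3} + ⋯ + M_{i_ℓ,i_1}) (with value -∞ if no cycle has finite weight). -/
open Filter

/-- The tropical (max-plus) semiring ℤ ∪ {-∞}: addition is max (lattice sup),
`+` is the tropical product with `⊥` absorbing. -/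
abbrev Zmax : Type := WithBot ℤ

/-- Square matrices over `Zmax`. -/
abbrev Mat (d : ℕ) : Type := Fin d → Fin d → Zmax

/-- Tropical matrix product: `(A⊗B) i j = max_k (A i k + B k j)`. -/
def tmul {d : ℕ} (A B : Mat d) : Mat d :=
  fun i j => Finset.univ.sup fun k => A i k + B k j

/-- Maximal entry of a matrix (`-∞` for the all-`⊥` matrix). -/
def tnorm {d : ℕ} (M : Mat d) : Zmax :=
  Finset.univ.sup fun i => Finset.univ.sup fun j => M i j

/-- Product of a list of matrices (junk value, the all-`⊥` matrix, on `[]`;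
only used on nonempty lists). -/
def prodL {d : ℕ} : List (Mat d) → Mat d
  | [] => fun _ _ => ⊥
  | [M] => M
  | M :: N :: L => tmul M (prodL (N :: L))

/-- Tropical identity matrix. -/
def tId (d : ℕ) : Mat d := fun i j => if i = j then (0 : Zmax) else ⊥

/-- Tropical matrix power. -/
def tpow {d : ℕ} (M : Mat d) : ℕ → Mat d
  | 0 => tId d
  | n+1 => tmul M (tpow M n)

/-- The subsemigroup generated by a set of matrices: all nonempty finite products. -/
def semi {d : ℕ} (Γ : Set (Mat d)) : Set (Mat d) :=
  {M | ∃ L : List (Mat d), L ≠ [] ∧ (∀ N ∈ L, N ∈ Γ) ∧ prodL L = M}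

/-- Embedding of `Zmax = ℤ ∪ {-∞}` into `EReal`. -/
noncomputable def z2e (x : Zmax) : EReal :=
  WithBot.recBotCoe ⊥ (fun n : ℤ => ((n : ℝ) : EReal)) x

/-- `minNorm Γ ℓ` is the minimum over all products of `ℓ` matrices from `Γ`
of `‖M₁⋯M_ℓ‖_∞ / ℓ`, as an extended real. -/
noncomputable def minNorm {d : ℕ} (Γ : Set (Mat d)) (ℓ : ℕ) : EReal :=
  sInf {x | ∃ L : List (Mat d), L.length = ℓ ∧ (∀ N ∈ L, N ∈ Γ) ∧
    x = z2e (tnorm (prodL L)) / (ℓ : EReal)}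

/-- Joint spectral radius: `inf_{ℓ>0} min{ ‖M₁⋯M_ℓ‖_∞/ℓ : Mᵢ ∈ Γ }`. -/
noncomputable def jsr {d : ℕ} (Γ : Set (Mat d)) : EReal :=
  ⨅ (ℓ : ℕ) (_ : 0 < ℓ), minNorm Γ ℓ

/-- Weight of the cycle `c 0 → c 1 → ⋯ → c ℓ → c 0` (length `ℓ+1`),
addition of `Fin (ℓ+1)` being cyclic. -/
def cycWeight {d : ℕ} (M : Mat d) {ℓ : ℕ} (c : Fin (ℓ+1) → Fin d) : Zmax :=
  ∑ k : Fin (ℓ+1), M (c k) (c (k+1))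

/-- Tropical spectral radius of a single matrix: the maximal average weight of
cycles in the graph of `M` (and `-∞` if there is no cycle of finite weight). -/
noncomputable def rho {d : ℕ} (M : Mat d) : EReal :=
  ⨆ (ℓ : ℕ) (c : Fin (ℓ+1) → Fin d), z2e (cycWeight M c) / ((ℓ+1 : ℕ) : EReal)

/-- A critical cycle: a cycle with finite weight whose average weight is `rho M`. -/
def IsCritCycle {d : ℕ} (M : Mat d) {ℓ : ℕ} (c : Fin (ℓ+1) → Fin d) : Prop :=
  cycWeight M c ≠ ⊥ ∧ z2e (cycWeight M c) / ((ℓ+1 : ℕ) : EReal) = rho M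

/-- Edges of the critical graph: edges lying on some critical cycle. -/
def critEdge {d : ℕ} (M : Mat d) (i j : Fin d) : Prop :=
  ∃ (ℓ : ℕ) (c : Fin (ℓ+1) → Fin d) (k : Fin (ℓ+1)),
    IsCritCycle M c ∧ c k = i ∧ c (k+1) = j

/-- Vertices of the critical graph. -/
def critVertex {d : ℕ} (M : Mat d) (i : Fin d) : Prop :=
  ∃ j, critEdge M i j ∨ critEdge M j i

/-- Strongly connected components of the critical graph: maximal sets of critical
vertices that are pairwise connected by paths in the critical graph. -/
def IsSCC {d : ℕ} (M : Mat d) (S : Set (Fin d)) : Prop :=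
  (∀ i ∈ S, critVertex M i) ∧
  (∀ i ∈ S, ∀ j ∈ S, Relation.ReflTransGen (critEdge M) i j) ∧
  (∀ T : Set (Fin d), S ⊆ T → (∀ i ∈ T, critVertex M i) →
    (∀ i ∈ T, ∀ j ∈ T, Relation.ReflTransGen (critEdge M) i j) → T = S)

/-- Greatest common divisor of a set of natural numbers. -/
noncomputable def setGcd (A : Set ℕ) : ℕ :=
  sInf {g | (∀ a ∈ A, g ∣ a) ∧ ∀ h, (∀ a ∈ A, h ∣ a) → h ∣ g}

/-- Cyclicity of a strongly connected component `S` of the critical graph of `M`: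
the gcd of the lengths of the cycles of the critical graph lying in `S`. -/
noncomputable def cyclicity {d : ℕ} (M : Mat d) (S : Set (Fin d)) : ℕ :=
  setGcd {n | ∃ (ℓ : ℕ) (c : Fin (ℓ+1) → Fin d), n = ℓ + 1 ∧
    (∀ k, critEdge M (c k) (c (k+1))) ∧ (∀ k, c k ∈ S)}

/-- Ultimate rank of a matrix: the sum of the cyclicities of the strongly
connected components of its critical graph. -/
noncomputable def urk {d : ℕ} (M : Mat d) : ℕ :=
  ∑ᶠ (S : Set (Fin d)) (_ : IsSCC M S), cyclicity M S

/-- `k ⊙ M`: add the integer `k` to every entry. -/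
def kadd {d : ℕ} (k : ℤ) (M : Mat d) : Mat d := fun i j => (k : Zmax) + M i j

/-- Value `I M F` computed from an initial row vector, a matrix and a final
column vector. -/
def runVal {d : ℕ} (I : Fin d → Zmax) (M : Mat d) (F : Fin d → Zmax) : Zmax :=
  Finset.univ.sup fun i => Finset.univ.sup fun j => I i + M i j + F j

section Aux
open Filter
open Fin.NatCast

lemma z2e_bot : z2e ⊥ = ⊥ := rfl
lemma z2e_coe (n : ℤ) : z2e (n : Zmax) = ((n : ℝ) : EReal) := rfl

lemma z2e_add (x y : Zmax) : z2e (x + y) = z2e x + z2e y := by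
  induction x using WithBot.recBotCoe with
  | bot => simp [z2e_bot]
  | coe a =>
    induction y using WithBot.recBotCoe with
    | bot => simp [z2e_bot]
    | coe b =>
      rw [← WithBot.coe_add, z2e_coe, z2e_coe, z2e_coe]
      push_cast
      rfl

lemma z2e_mono {x y : Zmax} (h : x ≤ y) : z2e x ≤ z2e y := by
  induction x using WithBot.recBotCoe with
  | bot => simp [z2e_bot]
  | coe a =>
    induction y using WithBot.recBotCoe with
    | bot => simp at h
    | coe b =>
      rw [z2e_coe, z2e_coe]
      rw [WithBot.coe_le_coe] at h
      exact_mod_cast h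

lemma z2e_ne_bot {x : Zmax} (h : x ≠ ⊥) : z2e x ≠ ⊥ := by
  induction x using WithBot.recBotCoe with
  | bot => simp at h
  | coe a => simp [z2e_coe]

/-- weight of a path of length `n` -/
def pw {d : ℕ} (M : Mat d) (p : ℕ → Fin d) (n : ℕ) : Zmax :=
  ∑ k ∈ Finset.range n, M (p k) (p (k+1))

lemma pw_zero {d : ℕ} (M : Mat d) (p : ℕ → Fin d) : pw M p 0 = 0 := rfl

lemma pw_succ' {d : ℕ} (M : Mat d) (p : ℕ → Fin d) (n : ℕ) :
    pw M p (n+1) = pw M (fun k => p (k+1)) n + M (p 0) (p 1) := by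
  rw [pw, Finset.sum_range_succ' (fun k => M (p k) (p (k+1))) n]; rfl

lemma pw_add {d : ℕ} (M : Mat d) (p : ℕ → Fin d) (m n : ℕ) :
    pw M p (m + n) = pw M p m + pw M (fun k => p (m + k)) n := by
  rw [pw, Finset.sum_range_add, pw, pw]
  congr 1

lemma tpow_ge {d : ℕ} (M : Mat d) : ∀ (n : ℕ) (p : ℕ → Fin d),
    pw M p n ≤ tpow M n (p 0) (p n) := by
  intro n
  induction n with
  | zero => intro p; simp [pw_zero, tpow, tId]
  | succ n ih =>
    intro p
    rw [pw_succ']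
    calc pw M (fun k => p (k+1)) n + M (p 0) (p 1)
        ≤ tpow M n (p 1) (p (n+1)) + M (p 0) (p 1) := by
          exact add_le_add_left (ih (fun k => p (k+1))) _
      _ = M (p 0) (p 1) + tpow M n (p 1) (p (n+1)) := add_comm _ _
      _ ≤ tpow M (n+1) (p 0) (p (n+1)) := by
          show _ ≤ tmul M (tpow M n) _ _
          exact Finset.le_sup (f := fun k => M (p 0) k + tpow M n k (p (n+1)))
            (Finset.mem_univ (p 1))

lemma tpow_le {d : ℕ} (M : Mat d) : ∀ (n : ℕ) (i j : Fin d),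
    tpow M n i j = ⊥ ∨ ∃ p : ℕ → Fin d, p 0 = i ∧ p n = j ∧ tpow M n i j ≤ pw M p n := by
  intro n
  induction n with
  | zero =>
    intro i j
    by_cases h : i = j
    · subst h
      exact Or.inr ⟨fun _ => i, rfl, rfl, by simp [tpow, tId, pw_zero]⟩
    · exact Or.inl (by simp [tpow, tId, h])
  | succ n ih =>
    intro i j
    have : Nonempty (Fin d) := ⟨i⟩
    obtain ⟨k, -, hk⟩ := Finset.exists_mem_eq_sup Finset.univ
      (Finset.univ_nonempty (α := Fin d)) (fun k => M i k + tpow M n k j)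
    have htop : tpow M (n+1) i j = M i k + tpow M n k j := hk
    rcases eq_or_ne (M i k + tpow M n k j) ⊥ with hb | hb
    · exact Or.inl (htop.trans hb)
    · have hMk : tpow M n k j ≠ ⊥ := fun h => hb (by simp [h])
      rcases ih k j with h | ⟨p, hp0, hpn, hple⟩
      · exact absurd h hMk
      · refine Or.inr ⟨fun m => if m = 0 then i else p (m-1), by simp, by simp [hpn], ?_⟩
        rw [pw_succ']
        have hshift : (fun m => (fun m => if m = 0 then i else p (m-1)) (m+1)) = p := by
          funext m; simp
        rw [htop]
        calc M i k + tpow M n k j ≤ M i k + pw M p n := add_le_add_right hple _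
          _ = pw M p n + M i k := add_comm _ _
          _ = _ := by rw [hshift]; simp [hp0]
lemma pw_congr {d : ℕ} (M : Mat d) {p q : ℕ → Fin d} {n : ℕ}
    (h : ∀ k, k ≤ n → p k = q k) : pw M p n = pw M q n := by
  rw [pw, pw]
  refine Finset.sum_congr rfl fun k hk => ?_
  rw [Finset.mem_range] at hk
  rw [h k (by omega), h (k+1) (by omega)]

lemma cycW_eq_segment {d : ℕ} (M : Mat d) (p : ℕ → Fin d) (a m : ℕ)
    (hp : p (a + (m+1)) = p a) :
    cycWeight M (fun k : Fin (m+1) => p (a + k.val)) =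
      ∑ j ∈ Finset.range (m+1), M (p (a+j)) (p (a+j+1)) := by
  set c : Fin (m+1) → Fin d := fun k => p (a + k.val) with hc
  have h1 : cycWeight M c = ∑ j ∈ Finset.range (m+1), M (c (j : Fin (m+1))) (c ((j : Fin (m+1))+1)) := by
    rw [cycWeight, ← Fin.sum_univ_eq_sum_range (fun j => M (c (j : Fin (m+1))) (c ((j : Fin (m+1))+1))) (m+1)]
    refine Finset.sum_congr rfl fun k _ => by rw [Fin.cast_val_eq_self]
  rw [h1]
  refine Finset.sum_congr rfl fun j hj => ?_
  rw [Finset.mem_range] at hj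
  have hv : ((j : Fin (m+1)) : ℕ) = j := by
    rw [Fin.val_natCast, Nat.mod_eq_of_lt hj]
  have h2 : c (j : Fin (m+1)) = p (a + j) := by rw [hc]; simp only [hv]
  have h3 : c ((j : Fin (m+1)) + 1) = p (a + j + 1) := by
    have hcast : ((j : Fin (m+1)) + 1) = ((j+1 : ℕ) : Fin (m+1)) := by push_cast; ring
    rw [hc, hcast]
    rcases Nat.lt_or_ge (j+1) (m+1) with h | h
    · simp only [Fin.val_natCast, Nat.mod_eq_of_lt h, ← Nat.add_assoc]
    · have hj1 : j = m := by omega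
      have hz : ((j+1 : ℕ) : Fin (m+1)) = 0 := by
        rw [hj1]; exact Fin.natCast_self (m+1)
      rw [hz]
      show p (a + (0 : Fin (m+1)).val) = p (a + j + 1)
      rw [show (0 : Fin (m+1)).val = 0 from rfl, Nat.add_zero, ← hp]
      congr 1
      omega
  rw [h2, h3]

lemma split_path {d : ℕ} (M : Mat d) (p : ℕ → Fin d) (a m s : ℕ)
    (hab : p (a + m) = p a) :
    pw M p (a + m + s) =
      (∑ j ∈ Finset.range m, M (p (a+j)) (p (a+j+1))) +
      pw M (fun k => if k < a then p k else p (k + m)) (a + s) := by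
  set p' : ℕ → Fin d := fun k => if k < a then p k else p (k + m) with hp'
  have e1 : pw M p (a+m+s) = pw M p a + (pw M (fun k => p (a+k)) m + pw M (fun k => p (a+(m+k))) s) := by
    rw [Nat.add_assoc, pw_add, pw_add]
  have eA : pw M (fun k => p (a+k)) m = ∑ j ∈ Finset.range m, M (p (a+j)) (p (a+j+1)) := by
    rw [pw]
    refine Finset.sum_congr rfl fun j _ => ?_
    show M (p (a+j)) (p (a+(j+1))) = _
    rw [← Nat.add_assoc]
  have e2 : pw M p' (a+s) = pw M p a + pw M (fun k => p (a+(m+k))) s := by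
    rw [pw_add]
    congr 1
    · refine pw_congr M fun k hk => ?_
      show p' k = p k
      rcases Nat.lt_or_ge k a with h | h
      · rw [hp']; simp [h]
      · have hk' : k = a := by omega
        rw [hp', hk']
        simp only [lt_irrefl, if_false]
        exact hab
    · refine pw_congr M fun k _ => ?_
      show p' (a+k) = p (a+(m+k))
      rw [hp']
      simp only [if_neg (by omega : ¬ a + k < a)]
      congr 1
      omega
  rw [e1, e2, eA, add_left_comm]

lemma pigeonhole {d : ℕ} [NeZero d] (p : ℕ → Fin d) :
    ∃ a m, 0 < m ∧ a + m ≤ d ∧ p (a + m) = p a := by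
  obtain ⟨x, y, hxy, hf⟩ := Fintype.exists_ne_map_eq_of_card_lt
    (fun k : Fin (d+1) => p k.val) (by simp)
  rcases Nat.lt_or_ge x.val y.val with h | h
  · exact ⟨x.val, y.val - x.val, by omega, by omega, by
      rw [show x.val + (y.val - x.val) = y.val by omega]; exact hf.symm⟩
  · have h' : y.val < x.val := by
      rcases Nat.lt_or_ge y.val x.val with h2 | h2
      · exact h2
      · exact absurd (Fin.ext (by omega)) hxy
    exact ⟨y.val, x.val - y.val, by omega, by omega, by
      rw [show y.val + (x.val - y.val) = x.val by omega]; exact hf⟩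
lemma cyc_div_le_rho {d : ℕ} (M : Mat d) (ℓ : ℕ) (c : Fin (ℓ+1) → Fin d) :
    z2e (cycWeight M c) / ((ℓ+1 : ℕ) : EReal) ≤ rho M :=
  le_iSup₂ (f := fun (ℓ : ℕ) (c : Fin (ℓ+1) → Fin d) =>
    z2e (cycWeight M c) / ((ℓ+1 : ℕ) : EReal)) ℓ c

lemma cyc_le_rho {d : ℕ} (M : Mat d) (ℓ : ℕ) (c : Fin (ℓ+1) → Fin d) :
    z2e (cycWeight M c) ≤ ((ℓ+1 : ℕ) : EReal) * rho M :=
  (EReal.div_le_iff_le_mul (by exact_mod_cast Nat.succ_pos ℓ)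
    (EReal.natCast_ne_top (ℓ+1))).mp (cyc_div_le_rho M ℓ c)

lemma rho_bot_cycles {d : ℕ} (M : Mat d) (h : rho M = ⊥) :
    ∀ (ℓ : ℕ) (c : Fin (ℓ+1) → Fin d), cycWeight M c = ⊥ := by
  intro ℓ c
  by_contra hne
  obtain ⟨w, hw⟩ : ∃ w : ℤ, cycWeight M c = (w : Zmax) :=
    ⟨(cycWeight M c).unbot hne, (WithBot.coe_unbot _ hne).symm⟩
  have h1 := cyc_div_le_rho M ℓ c
  rw [h, le_bot_iff, hw, z2e_coe, ← EReal.coe_coe_eq_natCast, ← EReal.coe_div] at h1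
  exact EReal.coe_ne_bot _ h1

lemma tnorm_eq_bot {d : ℕ} (N : Mat d) (h : ∀ i j, N i j = ⊥) : tnorm N = ⊥ := by
  rw [tnorm, le_bot_iff.symm]
  exact Finset.sup_le fun i _ => Finset.sup_le fun j _ => le_of_eq (h i j)

lemma tnorm_bot_of_rho_bot {d : ℕ} (M : Mat d) (h : rho M = ⊥) (n : ℕ) (hn : d ≤ n) :
    tnorm (tpow M n) = ⊥ := by
  refine tnorm_eq_bot _ fun i j => ?_
  have : NeZero d := ⟨fun h0 => (by rw [h0] at i; exact i.elim0)⟩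
  rcases tpow_le M n i j with hb | ⟨p, _, _, hple⟩
  · exact hb
  · rw [le_bot_iff.symm]
    refine le_trans hple (le_of_eq ?_)
    obtain ⟨a, m, hm, ham, hpp⟩ := pigeonhole p
    have hs : n = a + m + (n - (a+m)) := by omega
    rw [hs, split_path M p a m _ hpp]
    have hW : (∑ j ∈ Finset.range m, M (p (a+j)) (p (a+j+1))) = ⊥ := by
      have hm1 : m = (m-1)+1 := by omega
      have hc := cycW_eq_segment M p a (m-1) (by rw [← hm1]; exact hpp)
      rw [hm1, ← hc]
      exact rho_bot_cycles M h (m-1) _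
    rw [hW, WithBot.bot_add]
lemma nsmul_coe (n : ℕ) (A : ℤ) : n • ((A : Zmax)) = (((n : ℤ) * A : ℤ) : Zmax) := by
  induction n with
  | zero => simp
  | succ k ih =>
    rw [succ_nsmul, ih, ← WithBot.coe_add]
    congr 1
    push_cast
    ring

lemma pw_ub {d : ℕ} [NeZero d] (M : Mat d) (A : ℤ) (hA : ∀ i j, M i j ≤ (A:Zmax))
    (ρ : ℝ) (hρ : rho M = (ρ:EReal)) (hAρ : ρ ≤ (A:ℝ)) :
    ∀ (n : ℕ) (p : ℕ → Fin d),
      z2e (pw M p n) ≤ (((n:ℝ) * ρ + (d:ℝ)*((A:ℝ) - ρ) : ℝ) : EReal) := by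
  intro n
  induction n using Nat.strong_induction_on with
  | _ n ih =>
    intro p
    rcases le_or_gt n d with hnd | hnd
    · have h1 : pw M p n ≤ (((n:ℤ) * A : ℤ) : Zmax) := by
        rw [pw, ← nsmul_coe]
        have := Finset.sum_le_card_nsmul (Finset.range n)
          (fun k => M (p k) (p (k+1))) ((A:Zmax)) (fun k _ => hA _ _)
        rwa [Finset.card_range] at this
      refine le_trans (z2e_mono h1) ?_
      rw [z2e_coe]
      apply EReal.coe_le_coe_iff.mpr
      have hnd' : (n:ℝ) ≤ (d:ℝ) := by exact_mod_cast hnd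
      have hAρ' : 0 ≤ (A:ℝ) - ρ := by linarith
      push_cast
      nlinarith
    · obtain ⟨a, m, hm, ham, hpp⟩ := pigeonhole p
      have epw := split_path M p a m (n-(a+m)) hpp
      rw [show a + m + (n - (a+m)) = n by omega] at epw
      rw [epw, z2e_add]
      have hW : z2e (∑ j ∈ Finset.range m, M (p (a+j)) (p (a+j+1))) ≤ (((m:ℝ)*ρ : ℝ) : EReal) := by
        have hm1 : m = (m-1)+1 := by omega
        have hc := cycW_eq_segment M p a (m-1) (by rw [← hm1]; exact hpp)
        have h2 := cyc_le_rho M (m-1) (fun k => p (a + k.val))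
        rw [hc, hρ] at h2
        have h2' : z2e (∑ j ∈ Finset.range m, M (p (a+j)) (p (a+j+1))) ≤ ((m-1+1:ℕ):EReal) * (ρ:EReal) := by
          rw [hm1]; exact h2
        refine h2'.trans_eq ?_
        rw [← EReal.coe_coe_eq_natCast, ← EReal.coe_mul]
        have hmc : ((m-1+1:ℕ):ℝ) = (m:ℝ) := by exact_mod_cast hm1.symm
        rw [hmc]
      have hrest := ih (a + (n - (a+m))) (by omega) (fun k => if k < a then p k else p (k + m))
      refine le_trans (add_le_add hW hrest) (le_of_eq ?_)
      rw [← EReal.coe_add]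
      congr 1
      have hn' : ((a + (n - (a+m)) : ℕ):ℝ) = (n:ℝ) - (m:ℝ) := by
        push_cast [Nat.cast_sub (show a+m ≤ n by omega)]
        ring
      rw [hn']
      ring

lemma tnorm_tpow_ub {d : ℕ} [NeZero d] (M : Mat d) (A : ℤ) (hA : ∀ i j, M i j ≤ (A:Zmax))
    (ρ : ℝ) (hρ : rho M = (ρ:EReal)) (hAρ : ρ ≤ (A:ℝ)) (n : ℕ) :
    z2e (tnorm (tpow M n)) ≤ (((n:ℝ) * ρ + (d:ℝ)*((A:ℝ) - ρ) : ℝ) : EReal) := by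
  obtain ⟨i, -, hi⟩ := Finset.exists_mem_eq_sup Finset.univ
    (Finset.univ_nonempty (α := Fin d)) (fun i => Finset.univ.sup fun j => tpow M n i j)
  obtain ⟨j, -, hj⟩ := Finset.exists_mem_eq_sup Finset.univ
    (Finset.univ_nonempty (α := Fin d)) (fun j => tpow M n i j)
  have ht : tnorm (tpow M n) = tpow M n i j := by rw [tnorm, hi, hj]
  rw [ht]
  rcases tpow_le M n i j with hb | ⟨p, -, -, hple⟩
  · rw [hb, z2e_bot]; exact bot_le
  · exact le_trans (z2e_mono hple) (pw_ub M A hA ρ hρ hAρ n p)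
lemma entry_le_tnorm {d : ℕ} (N : Mat d) (i j : Fin d) : N i j ≤ tnorm N :=
  le_trans (Finset.le_sup (f := fun j => N i j) (Finset.mem_univ j))
    (Finset.le_sup (f := fun i => Finset.univ.sup fun j => N i j) (Finset.mem_univ i))

lemma cycle_lb {d ℓ : ℕ} (M : Mat d) (c : Fin (ℓ+1) → Fin d) (w : ℤ)
    (hw : cycWeight M c = (w : Zmax)) :
    ∃ b : ℤ, ∀ n : ℕ,
      (((n/(ℓ+1) : ℕ) * w + ((n % (ℓ+1) : ℕ)) * b : ℤ) : Zmax) ≤ tnorm (tpow M n) := by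
  classical
  set p : ℕ → Fin d := fun k => c ((k : ℕ) : Fin (ℓ+1)) with hp
  have hcast : ∀ q k : ℕ, ((q*(ℓ+1) + k : ℕ) : Fin (ℓ+1)) = ((k : ℕ) : Fin (ℓ+1)) := by
    intro q k
    push_cast
    simp [Fin.natCast_self]
  have hper : ∀ q k : ℕ, p (q*(ℓ+1) + k) = p k := by
    intro q k; rw [hp]; simp only [hcast]
  have he : ∀ k : Fin (ℓ+1), M (c k) (c (k+1)) ≠ ⊥ := by
    intro k hk
    have : cycWeight M c = ⊥ := by
      rw [cycWeight, ← Finset.add_sum_erase Finset.univ _ (Finset.mem_univ k), hk,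
        WithBot.bot_add]
    rw [hw] at this
    exact WithBot.coe_ne_bot this
  set e : Fin (ℓ+1) → ℤ := fun k => WithBot.unbotD 0 (M (c k) (c (k+1))) with hee
  have hE : ∀ k : Fin (ℓ+1), M (c k) (c (k+1)) = ((e k : ℤ) : Zmax) := by
    intro k
    rw [hee]
    rcases h : M (c k) (c (k+1)) with _ | a
    · exact absurd h (he k)
    · simp only [h]; rfl
  refine ⟨Finset.univ.inf' (Finset.univ_nonempty (α := Fin (ℓ+1))) e, fun n => ?_⟩
  set b := Finset.univ.inf' (Finset.univ_nonempty (α := Fin (ℓ+1))) e with hbb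
  have hb : ∀ k : Fin (ℓ+1), ((b:ℤ) : Zmax) ≤ M (c k) (c (k+1)) := by
    intro k
    rw [hE k, WithBot.coe_le_coe]
    exact Finset.inf'_le e (Finset.mem_univ k)
  have hp0 : p (0 + (ℓ+1)) = p 0 := by
    rw [hp]
    exact congrArg c (by rw [show 0 + (ℓ+1) = 1*(ℓ+1) + 0 by ring]; exact hcast 1 0)
  have hpwL : pw M p (ℓ+1) = (w : Zmax) := by
    have hc := cycW_eq_segment M p 0 ℓ hp0
    have hfun : (fun k : Fin (ℓ+1) => p (0 + k.val)) = c := by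
      funext k
      rw [hp]
      simp [Fin.cast_val_eq_self]
    rw [hfun, hw] at hc
    simp only [Nat.zero_add] at hc
    rw [pw]
    exact hc.symm
  have hmulq : ∀ q : ℕ, pw M p (q*(ℓ+1)) = (((q:ℤ)*w : ℤ) : Zmax) := by
    intro q
    induction q with
    | zero => simp [pw_zero]
    | succ q ih =>
      rw [show (q+1)*(ℓ+1) = q*(ℓ+1) + (ℓ+1) by ring, pw_add, ih]
      have hshift : pw M (fun k => p (q*(ℓ+1) + k)) (ℓ+1) = pw M p (ℓ+1) :=
        pw_congr M fun k _ => hper q k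
      rw [hshift, hpwL, ← WithBot.coe_add]
      congr 1
      push_cast
      ring
  have hpartial : ∀ r : ℕ, (((r:ℤ)*b : ℤ) : Zmax) ≤ pw M p r := by
    intro r
    have hs : (Finset.range r).card • ((b:ℤ) : Zmax) ≤ ∑ k ∈ Finset.range r, M (p k) (p (k+1)) := by
      refine Finset.card_nsmul_le_sum _ _ _ fun k _ => ?_
      have h2 : ((k+1 : ℕ) : Fin (ℓ+1)) = ((k:ℕ) : Fin (ℓ+1)) + 1 := by push_cast; ring
      rw [hp]
      show ((b:ℤ):Zmax) ≤ M (c ((k:ℕ) : Fin (ℓ+1))) (c ((k+1 : ℕ) : Fin (ℓ+1)))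
      rw [h2]
      exact hb _
    rw [Finset.card_range, nsmul_coe] at hs
    exact hs
  have hsplit : pw M p ((n/(ℓ+1))*(ℓ+1) + n % (ℓ+1)) = (((n/(ℓ+1) : ℕ):ℤ)*w : ℤ) + pw M p (n % (ℓ+1)) := by
    rw [pw_add, hmulq]
    congr 1
    exact pw_congr M fun k _ => hper (n/(ℓ+1)) k
  have hn : (n/(ℓ+1))*(ℓ+1) + n % (ℓ+1) = n := by
    rw [Nat.mul_comm]; exact Nat.div_add_mod n (ℓ+1)
  have hsplit' : pw M p n = (((n/(ℓ+1) : ℕ):ℤ)*w : ℤ) + pw M p (n % (ℓ+1)) := by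
    conv_lhs => rw [← hn]
    exact hsplit
  have hlow : (((n/(ℓ+1) : ℕ) * w + ((n % (ℓ+1) : ℕ)) * b : ℤ) : Zmax) ≤ pw M p n := by
    rw [hsplit', WithBot.coe_add]
    exact add_le_add_right (hpartial (n % (ℓ+1))) _
  calc _ ≤ pw M p n := hlow
    _ ≤ tpow M n (p 0) (p n) := tpow_ge M n p
    _ ≤ tnorm (tpow M n) := entry_le_tnorm _ _ _
lemma real_limit (L : ℕ) (hL : 0 < L) (w b : ℤ) :
    Filter.Tendsto (fun n : ℕ => (((n/L:ℕ):ℝ) * (w:ℝ) + ((n%L:ℕ):ℝ) * (b:ℝ))/(n:ℝ))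
      Filter.atTop (nhds ((w:ℝ)/(L:ℝ))) := by
  have hL' : (0:ℝ) < L := by exact_mod_cast hL
  have h1 : Filter.Tendsto (fun n : ℕ => ((n/L:ℕ):ℝ)/(n:ℝ)) Filter.atTop (nhds (1/(L:ℝ))) := by
    refine tendsto_of_tendsto_of_tendsto_of_le_of_le'
      (g := fun n : ℕ => 1/(L:ℝ) - 1/(n:ℝ)) (h := fun _ : ℕ => 1/(L:ℝ))
      (by simpa using tendsto_const_nhds.sub (tendsto_one_div_atTop_nhds_zero_nat (𝕜 := ℝ)))
      tendsto_const_nhds ?_ ?_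
    · filter_upwards [Filter.eventually_ge_atTop 1] with n hn
      have hn' : (0:ℝ) < n := by exact_mod_cast hn
      have hq : (L:ℝ)*((n/L:ℕ):ℝ) + ((n%L:ℕ):ℝ) = n := by exact_mod_cast Nat.div_add_mod n L
      have hr : ((n%L:ℕ):ℝ) < L := by exact_mod_cast Nat.mod_lt n hL
      have e1 : 1/(L:ℝ) - 1/(n:ℝ) = ((n:ℝ) - L)/((L:ℝ)*n) := by
        field_simp
      have e2 : ((n/L:ℕ):ℝ)/(n:ℝ) = ((L:ℝ)*((n/L:ℕ):ℝ))/((L:ℝ)*n) := by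
        rw [mul_div_mul_left _ _ hL'.ne']
      rw [e1, e2]
      gcongr
      linarith
    · filter_upwards [Filter.eventually_ge_atTop 1] with n hn
      have hn' : (0:ℝ) < n := by exact_mod_cast hn
      rw [div_le_div_iff₀ hn' hL']
      have h := Nat.div_mul_le_self n L
      calc ((n/L:ℕ):ℝ) * L ≤ (n:ℝ) := by exact_mod_cast h
        _ = 1 * n := (one_mul _).symm
  have h2 : Filter.Tendsto (fun n : ℕ => (((n%L:ℕ):ℝ) * (b:ℝ))/(n:ℝ)) Filter.atTop (nhds 0) := by
    refine squeeze_zero_norm (a := fun n : ℕ => ((L:ℝ)*|(b:ℝ)|)/(n:ℝ)) (fun n => ?_)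
      (tendsto_const_div_atTop_nhds_zero_nat _)
    have hn0 : (0:ℝ) ≤ (n:ℝ) := Nat.cast_nonneg n
    rw [norm_div, Real.norm_eq_abs, Real.norm_eq_abs, abs_mul, abs_of_nonneg hn0]
    refine div_le_div_of_nonneg_right ?_ hn0
    refine mul_le_mul_of_nonneg_right ?_ (abs_nonneg _)
    rw [abs_of_nonneg (Nat.cast_nonneg _)]
    exact_mod_cast le_of_lt (Nat.mod_lt n hL)
  have hmain := (h1.const_mul (w:ℝ)).add h2
  have : (w:ℝ) * (1/(L:ℝ)) + 0 = (w:ℝ)/(L:ℝ) := by ring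
  rw [this] at hmain
  refine hmain.congr fun n => ?_
  field_simp
theorem stmt_3 {d : ℕ} (M : Mat d) :
    Filter.Tendsto (fun n : ℕ => z2e (tnorm (tpow M n)) / (n : EReal))
      Filter.atTop (nhds (rho M)) := by
  classical
  set f : ℕ → EReal := fun n => z2e (tnorm (tpow M n)) / (n : EReal) with hf
  rcases eq_or_ne (rho M) ⊥ with hbot | hne
  · rw [hbot]
    have hev : (fun _ : ℕ => (⊥:EReal)) =ᶠ[Filter.atTop] f := by
      filter_upwards [Filter.eventually_ge_atTop (d+1)] with n hn
      have h1 : tnorm (tpow M n) = ⊥ := tnorm_bot_of_rho_bot M hbot n (by omega)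
      show (⊥:EReal) = z2e (tnorm (tpow M n)) / (n : EReal)
      rw [h1, z2e_bot, EReal.bot_div_of_pos_ne_top]
      · exact_mod_cast (show 0 < n by omega)
      · exact EReal.natCast_ne_top n
    exact Filter.Tendsto.congr' hev tendsto_const_nhds
  · have hd : NeZero d := by
      constructor
      intro h0
      apply hne
      subst h0
      rw [rho]
      simp
    have htn : tnorm M ≠ ⊥ := by
      intro htb
      apply hne
      have hentry : ∀ i j, M i j = ⊥ := fun i j =>
        le_bot_iff.mp (htb ▸ entry_le_tnorm M i j)
      refine le_bot_iff.mp ?_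
      rw [rho]
      refine iSup₂_le fun ℓ c => ?_
      have hcb : cycWeight M c = ⊥ := by
        rw [cycWeight, ← Finset.add_sum_erase Finset.univ _ (Finset.mem_univ (0 : Fin (ℓ+1))),
          hentry, WithBot.bot_add]
      rw [hcb, z2e_bot, EReal.bot_div_of_pos_ne_top
        (by exact_mod_cast Nat.succ_pos ℓ) (EReal.natCast_ne_top _)]
    obtain ⟨A, hAt⟩ : ∃ A : ℤ, tnorm M = (A : Zmax) := ⟨_, (WithBot.coe_unbot _ htn).symm⟩
    have hA : ∀ i j, M i j ≤ (A : Zmax) := fun i j => hAt ▸ entry_le_tnorm M i j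
    have hrhoA : rho M ≤ ((A:ℝ) : EReal) := by
      rw [rho]
      refine iSup₂_le fun ℓ c => ?_
      rw [EReal.div_le_iff_le_mul (by exact_mod_cast Nat.succ_pos ℓ) (EReal.natCast_ne_top _)]
      have h1 : cycWeight M c ≤ (((ℓ+1:ℤ))*A : ℤ) := by
        have h2 := Finset.sum_le_card_nsmul Finset.univ
          (fun k => M (c k) (c (k+1))) ((A:Zmax)) (fun k _ => hA _ _)
        rw [Finset.card_univ, Fintype.card_fin, nsmul_coe] at h2
        rw [cycWeight]
        refine le_trans h2 (le_of_eq ?_)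
        congr 1
      refine le_trans (z2e_mono h1) (le_of_eq ?_)
      rw [z2e_coe, ← EReal.coe_coe_eq_natCast, ← EReal.coe_mul]
      congr 1
      push_cast
      ring
    have hrhot : rho M ≠ ⊤ := (lt_of_le_of_lt hrhoA (EReal.coe_lt_top _)).ne
    obtain ⟨ρ, hρ⟩ : ∃ ρ : ℝ, rho M = (ρ : EReal) := by
      lift (rho M) to ℝ using ⟨hrhot, hne⟩ with r
      exact ⟨r, rfl⟩
    have hAρ : ρ ≤ (A:ℝ) := by
      rw [hρ] at hrhoA
      exact_mod_cast hrhoA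
    set C : ℝ := (d:ℝ)*((A:ℝ)-ρ) with hC
    have hub : f ≤ᶠ[Filter.atTop] fun n : ℕ => ((ρ + C/(n:ℝ) : ℝ) : EReal) := by
      filter_upwards [Filter.eventually_ge_atTop 1] with n hn
      have hn' : (0:ℝ) < n := by exact_mod_cast hn
      show z2e (tnorm (tpow M n)) / (n : EReal) ≤ _
      rw [EReal.div_le_iff_le_mul (by exact_mod_cast (show 0 < n by omega))
        (EReal.natCast_ne_top n)]
      have he : ((n:ℕ):EReal) * ((ρ + C/(n:ℝ) : ℝ):EReal) = (((n:ℝ)*ρ + C : ℝ):EReal) := by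
        rw [← EReal.coe_coe_eq_natCast, ← EReal.coe_mul]
        congr 1
        field_simp
      rw [he]
      exact tnorm_tpow_ub M A hA ρ hρ hAρ n
    have hgl : Filter.Tendsto (fun n : ℕ => ((ρ + C/(n:ℝ) : ℝ):EReal))
        Filter.atTop (nhds ((ρ:ℝ) : EReal)) :=
      EReal.tendsto_coe.mpr
        (by simpa using tendsto_const_nhds.add (tendsto_const_div_atTop_nhds_zero_nat C))
    have hlimsup : Filter.limsup f Filter.atTop ≤ rho M := by
      rw [hρ]
      exact le_trans (Filter.limsup_le_limsup hub) (le_of_eq hgl.limsup_eq)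
    have hliminf : rho M ≤ Filter.liminf f Filter.atTop := by
      conv_lhs => rw [rho]
      refine iSup₂_le fun ℓ c => ?_
      rcases eq_or_ne (cycWeight M c) ⊥ with hcb | hcb
      · rw [hcb, z2e_bot, EReal.bot_div_of_pos_ne_top
          (by exact_mod_cast Nat.succ_pos ℓ) (EReal.natCast_ne_top _)]
        exact bot_le
      · obtain ⟨w, hw⟩ : ∃ w : ℤ, cycWeight M c = (w : Zmax) :=
          ⟨_, (WithBot.coe_unbot _ hcb).symm⟩
        obtain ⟨b, hball⟩ := cycle_lb M c w hw
        set g : ℕ → ℝ :=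
          fun n => (((n/(ℓ+1):ℕ):ℝ)*(w:ℝ) + ((n%(ℓ+1):ℕ):ℝ)*(b:ℝ))/(n:ℝ) with hg
        have hge : (fun n => ((g n : ℝ):EReal)) ≤ᶠ[Filter.atTop] f := by
          filter_upwards [Filter.eventually_ge_atTop 1] with n hn
          have hn' : (0:ℝ) < n := by exact_mod_cast hn
          show ((g n : ℝ):EReal) ≤ z2e (tnorm (tpow M n)) / (n : EReal)
          rw [EReal.le_div_iff_mul_le (by exact_mod_cast (show 0 < n by omega))
            (EReal.natCast_ne_top n)]
          obtain ⟨q, hq⟩ : ∃ q, n/(ℓ+1) = q := ⟨_, rfl⟩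
          obtain ⟨r, hr⟩ : ∃ r, n%(ℓ+1) = r := ⟨_, rfl⟩
          have e3 : ((g n : ℝ):EReal) * ((n:ℕ):EReal) =
              ((((q : ℕ) * w + (r : ℕ) * b : ℤ):ℝ) : EReal) := by
            rw [← EReal.coe_coe_eq_natCast, ← EReal.coe_mul]
            congr 1
            rw [hg]
            simp only [hq, hr]
            push_cast
            field_simp
          rw [e3]
          have h5 := z2e_mono (hball n)
          rw [z2e_coe, hq, hr] at h5
          exact h5
        have hgt : Filter.Tendsto (fun n => ((g n : ℝ):EReal)) Filter.atTop
            (nhds (((w:ℝ)/((ℓ+1:ℕ):ℝ) : ℝ):EReal)) :=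
          EReal.tendsto_coe.mpr (real_limit (ℓ+1) (Nat.succ_pos ℓ) w b)
        have h4 : z2e (cycWeight M c) / ((ℓ+1:ℕ):EReal) = (((w:ℝ)/((ℓ+1:ℕ):ℝ) : ℝ):EReal) := by
          rw [hw, z2e_coe, ← EReal.coe_coe_eq_natCast, ← EReal.coe_div]
        rw [h4, ← hgt.liminf_eq]
        exact Filter.liminf_le_liminf hge
    exact tendsto_of_le_liminf_of_limsup_le hliminf hlimsup
end Aux
end

section
/- Let A be a max-plus automaton over Σ with d states (map μ, initial vector I, final vector F, weights in a set S ⊆ Z), and let ⋆ ∉ Σ. Construct A' over Σ' = Σ ∪ {⋆} with d+1 states, all initial and final, by adding a new state q and ⋆-labelled weight-0 transitions: from every final state of A to every initial state of A, from every final state of A to q, a loop on q, and from q to every initial state of A; all letters of Σ keep their transitions from A. Then for every word w ∈ Σ⁺ and every k ∈ N, [[A']]((⋆w)^k ⋆) = k · [[A]](w). -/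
open Filter

/-- The star-extension automaton `A'`: one extra state `q` (index `d`), and
`⋆`-labelled weight-0 transitions from final states to initial states, from final
states to `q`, a loop on `q`, and from `q` to initial states. -/
def starMu {α : Type} {d : ℕ} (μ : α → Mat d) (I F : Fin d → Zmax) :
    α ⊕ Unit → Mat (d + 1)
  | Sum.inl a => fun i j =>
      if hi : (i : ℕ) < d then
        if hj : (j : ℕ) < d then μ a ⟨i, hi⟩ ⟨j, hj⟩ else ⊥
      else ⊥
  | Sum.inr _ => fun i j =>
      if hi : (i : ℕ) < d then
        if hj : (j : ℕ) < d then
          (if F ⟨i, hi⟩ = 0 ∧ I ⟨j, hj⟩ = 0 then (0 : Zmax) else ⊥)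
        else (if F ⟨i, hi⟩ = 0 then (0 : Zmax) else ⊥)
      else
        if hj : (j : ℕ) < d then (if I ⟨j, hj⟩ = 0 then (0 : Zmax) else ⊥)
        else (0 : Zmax)


section Helpers

lemma zadd_sup (c x y : Zmax) : c + (x ⊔ y) = (c + x) ⊔ (c + y) := by
  rcases le_total x y with h|h <;>
    simp [max_eq_right h, max_eq_left h, max_eq_right, max_eq_left,
      add_le_add_right h c, add_le_add_right]

lemma zsup_add (x y c : Zmax) : (x ⊔ y) + c = (x + c) ⊔ (y + c) := by
  rw [add_comm, zadd_sup, add_comm c x, add_comm c y]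

lemma zadd_finsup {n : ℕ} (c : Zmax) (f : Fin n → Zmax) :
    c + Finset.univ.sup f = Finset.univ.sup fun x => c + f x :=
  Finset.comp_sup_eq_sup_comp (c + ·) (fun x y => zadd_sup c x y) (WithBot.add_bot c)

lemma zfinsup_add {n : ℕ} (f : Fin n → Zmax) (c : Zmax) :
    Finset.univ.sup f + c = Finset.univ.sup fun x => f x + c :=
  Finset.comp_sup_eq_sup_comp (· + c) (fun x y => zsup_add x y c) (WithBot.bot_add c)

lemma tmul_assoc' {d : ℕ} (A B C : Mat d) : tmul (tmul A B) C = tmul A (tmul B C) := by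
  funext i j
  simp only [tmul, zfinsup_add, zadd_finsup]
  rw [Finset.sup_comm]
  simp [add_assoc]

lemma prodL_cons' {d : ℕ} (M : Mat d) (L : List (Mat d)) (h : L ≠ []) :
    prodL (M :: L) = tmul M (prodL L) := by
  cases L with
  | nil => simp at h
  | cons N L' => rfl

lemma prodL_append' {d : ℕ} (L1 L2 : List (Mat d)) (h1 : L1 ≠ []) (h2 : L2 ≠ []) :
    prodL (L1 ++ L2) = tmul (prodL L1) (prodL L2) := by
  induction L1 with
  | nil => simp at h1
  | cons M L ih =>
    cases L with
    | nil => exact prodL_cons' M L2 h2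
    | cons N L' =>
      rw [List.cons_append, prodL_cons' M _ (by simp), prodL_cons' M (N :: L') (by simp),
        tmul_assoc']
      exact congrArg (tmul M) (ih (by simp))

lemma supSucc' {d : ℕ} (g : Fin (d+1) → Zmax) :
    Finset.univ.sup g = g (Fin.last d) ⊔ Finset.univ.sup (g ∘ Fin.castSucc) := by
  rw [Fin.univ_castSuccEmb, Finset.sup_cons, Finset.sup_map]
  rfl

/-- Embedding of a `d × d` matrix into dimension `d+1` with `⊥` padding. -/
def tlift {d : ℕ} (M : Mat d) : Mat (d+1) := fun i j =>
  if hi : (i:ℕ) < d then if hj : (j:ℕ) < d then M ⟨i,hi⟩ ⟨j,hj⟩ else ⊥ else ⊥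

lemma tlift_tmul {d : ℕ} (A B : Mat d) : tmul (tlift A) (tlift B) = tlift (tmul A B) := by
  funext i j
  have e0 : tmul (tlift A) (tlift B) i j = Finset.univ.sup fun k => tlift A i k + tlift B k j := rfl
  rw [e0, supSucc']
  have l1 : tlift A i (Fin.last d) = ⊥ := by simp [tlift]
  simp only [l1, WithBot.bot_add, bot_sup_eq]
  by_cases hi : (i:ℕ) < d
  · by_cases hj : (j:ℕ) < d
    · have : tlift (tmul A B) i j = tmul A B ⟨i,hi⟩ ⟨j,hj⟩ := by simp [tlift, hi, hj]
      rw [this]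
      congr 1
      funext k
      show tlift A i k.castSucc + tlift B k.castSucc j = _
      have e1 : tlift A i k.castSucc = A ⟨i,hi⟩ k := by simp [tlift, hi, k.isLt]
      have e2 : tlift B k.castSucc j = B k ⟨j,hj⟩ := by simp [tlift, hj, k.isLt]
      rw [e1, e2]
    · have : tlift (tmul A B) i j = ⊥ := by simp [tlift, hj]
      rw [this]
      simp only [Finset.sup_eq_bot_iff]
      intro k _
      show tlift A i k.castSucc + tlift B k.castSucc j = ⊥
      have : tlift B k.castSucc j = ⊥ := by simp [tlift, hj]
      rw [this, WithBot.add_bot]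
  · have : tlift (tmul A B) i j = ⊥ := by simp [tlift, hi]
    rw [this]
    simp only [Finset.sup_eq_bot_iff]
    intro k _
    show tlift A i k.castSucc + tlift B k.castSucc j = ⊥
    have : tlift A i k.castSucc = ⊥ := by simp [tlift, hi]
    rw [this, WithBot.bot_add]

lemma prodL_map_tlift {d : ℕ} (L : List (Mat d)) (h : L ≠ []) :
    prodL (L.map tlift) = tlift (prodL L) := by
  induction L with
  | nil => simp at h
  | cons M L ih =>
    cases L with
    | nil => rfl
    | cons N L' =>
      rw [List.map_cons, prodL_cons' _ _ (by simp), ih (by simp),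
        prodL_cons' M _ (by simp), tlift_tmul]

lemma le_sup2' {n m : ℕ} (f : Fin n → Fin m → Zmax) (p : Fin n) (q : Fin m) :
    f p q ≤ Finset.univ.sup fun i => Finset.univ.sup fun j => f i j :=
  le_trans (Finset.le_sup (f := f p) (Finset.mem_univ q))
    (Finset.le_sup (f := fun i => Finset.univ.sup fun j => f i j) (Finset.mem_univ p))

/-- `fFv F` : the extension of a 0/⊥ vector to `Fin (d+1)`, with value 0 at the new state. -/
def fFv {d : ℕ} (F : Fin d → Zmax) : Fin (d+1) → Zmax :=
  fun i => if h : (i:ℕ) < d then F ⟨i,h⟩ else 0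

lemma fFv_cases {d : ℕ} {F : Fin d → Zmax} (hF : ∀ i, F i = 0 ∨ F i = ⊥) (i : Fin (d+1)) :
    fFv F i = 0 ∨ fFv F i = ⊥ := by
  unfold fFv
  split
  · exact hF _
  · left; rfl

lemma E_eq {α : Type} {d : ℕ} (μ : α → Mat d) (I F : Fin d → Zmax)
    (hI : ∀ i, I i = 0 ∨ I i = ⊥) (hF : ∀ i, F i = 0 ∨ F i = ⊥) (i j : Fin (d+1)) :
    starMu μ I F (Sum.inr ()) i j = fFv F i + fFv I j := by
  show (if hi : (i : ℕ) < d then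
        if hj : (j : ℕ) < d then
          (if F ⟨i, hi⟩ = 0 ∧ I ⟨j, hj⟩ = 0 then (0 : Zmax) else ⊥)
        else (if F ⟨i, hi⟩ = 0 then (0 : Zmax) else ⊥)
      else
        if hj : (j : ℕ) < d then (if I ⟨j, hj⟩ = 0 then (0 : Zmax) else ⊥)
        else (0 : Zmax)) = fFv F i + fFv I j
  unfold fFv
  by_cases hi : (i:ℕ) < d <;> by_cases hj : (j:ℕ) < d <;>
    simp only [hi, hj, dif_pos, dif_neg, not_false_iff]
  · rcases hF ⟨i,hi⟩ with h1|h1 <;> rcases hI ⟨j,hj⟩ with h2|h2 <;>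
      simp [h1, h2]
  · rcases hF ⟨i,hi⟩ with h1|h1 <;> simp [h1]
  · rcases hI ⟨j,hj⟩ with h2|h2 <;> simp [h2]
  · simp

lemma tnorm_E {α : Type} {d : ℕ} (μ : α → Mat d) (I F : Fin d → Zmax)
    (hI : ∀ i, I i = 0 ∨ I i = ⊥) (hF : ∀ i, F i = 0 ∨ F i = ⊥) :
    tnorm (starMu μ I F (Sum.inr ())) = 0 := by
  apply le_antisymm
  · apply Finset.sup_le; intro i _
    apply Finset.sup_le; intro j _
    rw [E_eq μ I F hI hF]
    rcases fFv_cases hF i with h1|h1 <;> rcases fFv_cases hI j with h2|h2 <;>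
      simp [h1, h2]
  · have h : starMu μ I F (Sum.inr ()) (Fin.last d) (Fin.last d) = 0 := by
      rw [E_eq μ I F hI hF]
      unfold fFv
      simp
    rw [← h]
    exact le_sup2' (fun i j => starMu μ I F (Sum.inr ()) i j) (Fin.last d) (Fin.last d)

lemma EWE {α : Type} {d : ℕ} (μ : α → Mat d) (I F : Fin d → Zmax)
    (hI : ∀ i, I i = 0 ∨ I i = ⊥) (hF : ∀ i, F i = 0 ∨ F i = ⊥) (M : Mat d) :
    tmul (tmul (starMu μ I F (Sum.inr ())) (tlift M)) (starMu μ I F (Sum.inr ())) =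
      fun i j => runVal I M F + starMu μ I F (Sum.inr ()) i j := by
  funext i j
  have expand : tmul (tmul (starMu μ I F (Sum.inr ())) (tlift M)) (starMu μ I F (Sum.inr ())) i j =
      Finset.univ.sup fun q => Finset.univ.sup fun p =>
        (starMu μ I F (Sum.inr ()) i p + tlift M p q) + starMu μ I F (Sum.inr ()) q j := by
    show (Finset.univ.sup fun q =>
      (Finset.univ.sup fun p => starMu μ I F (Sum.inr ()) i p + tlift M p q)
        + starMu μ I F (Sum.inr ()) q j) = _
    congr 1
    funext q
    rw [zfinsup_add]
  rw [expand]
  apply le_antisymm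
  · apply Finset.sup_le; intro q _
    apply Finset.sup_le; intro p _
    by_cases hp : (p:ℕ) < d
    · by_cases hq : (q:ℕ) < d
      · have hlift : tlift M p q = M ⟨p,hp⟩ ⟨q,hq⟩ := by simp [tlift, hp, hq]
        have hEip : starMu μ I F (Sum.inr ()) i p = fFv F i + I ⟨p,hp⟩ := by
          rw [E_eq μ I F hI hF]; unfold fFv; rw [dif_pos hp]
        have hEqj : starMu μ I F (Sum.inr ()) q j = F ⟨q,hq⟩ + fFv I j := by
          rw [E_eq μ I F hI hF]; unfold fFv; rw [dif_pos hq]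
        have hterm : (starMu μ I F (Sum.inr ()) i p + tlift M p q)
              + starMu μ I F (Sum.inr ()) q j =
            (I ⟨p,hp⟩ + M ⟨p,hp⟩ ⟨q,hq⟩ + F ⟨q,hq⟩) + (fFv F i + fFv I j) := by
          rw [hlift, hEip, hEqj]; abel
        rw [hterm, ← E_eq μ I F hI hF]
        apply add_le_add_left
        exact le_sup2' (fun i' j' => I i' + M i' j' + F j') ⟨p,hp⟩ ⟨q,hq⟩
      · have : tlift M p q = ⊥ := by simp [tlift, hq]
        simp [this]
    · have : tlift M p q = ⊥ := by simp [tlift, hp]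
      simp [this]
  · rcases fFv_cases hF i with h1|h1
    · rcases fFv_cases hI j with h2|h2
      · have hEij : starMu μ I F (Sum.inr ()) i j = 0 := by
          rw [E_eq μ I F hI hF, h1, h2, add_zero]
        rw [hEij, add_zero]
        unfold runVal
        apply Finset.sup_le; intro p _
        apply Finset.sup_le; intro q _
        rcases hI p with hp0|hp0
        swap
        · simp [hp0]
        rcases hF q with hq0|hq0
        swap
        · simp [hq0]
        have key : I p + M p q + F q =
            (starMu μ I F (Sum.inr ()) i p.castSucc + tlift M p.castSucc q.castSucc)
              + starMu μ I F (Sum.inr ()) q.castSucc j := by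
          have e1 : starMu μ I F (Sum.inr ()) i p.castSucc = 0 := by
            rw [E_eq μ I F hI hF, h1]
            simp [fFv, p.isLt, hp0]
          have e2 : starMu μ I F (Sum.inr ()) q.castSucc j = 0 := by
            rw [E_eq μ I F hI hF, h2]
            simp [fFv, q.isLt, hq0]
          have e3 : tlift M p.castSucc q.castSucc = M p q := by
            simp [tlift, p.isLt, q.isLt]
          rw [e1, e2, e3, hp0, hq0]
        rw [key]
        exact le_sup2' (fun q' p' =>
          (starMu μ I F (Sum.inr ()) i p' + tlift M p' q')
            + starMu μ I F (Sum.inr ()) q' j) q.castSucc p.castSucc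
      · have : starMu μ I F (Sum.inr ()) i j = ⊥ := by
          rw [E_eq μ I F hI hF, h2, WithBot.add_bot]
        simp [this]
    · have : starMu μ I F (Sum.inr ()) i j = ⊥ := by
        rw [E_eq μ I F hI hF, h1, WithBot.bot_add]
      simp [this]

lemma tmul_cadd {d : ℕ} (A B : Mat d) (c : Zmax) :
    tmul A (fun i j => c + B i j) = fun i j => c + tmul A B i j := by
  funext i j
  show (Finset.univ.sup fun k => A i k + (c + B k j))
      = c + Finset.univ.sup fun k => A i k + B k j
  rw [zadd_finsup]
  congr 1
  funext k
  rw [add_left_comm]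

lemma tnorm_cadd {d : ℕ} (M : Mat d) (c : Zmax) :
    tnorm (fun i j => c + M i j) = c + tnorm M := by
  unfold tnorm
  rw [zadd_finsup]
  congr 1
  funext i
  rw [zadd_finsup]

end Helpers

theorem stmt_15 {α : Type} {d : ℕ} (μ : α → Mat d) (I F : Fin d → Zmax)
    (hI : ∀ i, I i = 0 ∨ I i = ⊥) (hF : ∀ i, F i = 0 ∨ F i = ⊥) :
    ∀ (w : List α) (k : ℕ), w ≠ [] →
      tnorm (prodL ((((List.replicate k (Sum.inr () :: w.map Sum.inl)).flatten
          ++ [Sum.inr ()])).map (starMu μ I F))) =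
        k • runVal I (prodL (w.map μ)) F := by
  intro w k hw
  have hwmap : w.map μ ≠ [] := by simpa using hw
  have key : ∀ k : ℕ, prodL ((((List.replicate k (Sum.inr () :: w.map Sum.inl)).flatten
      ++ [Sum.inr ()])).map (starMu μ I F)) =
      fun i j => (k • runVal I (prodL (w.map μ)) F) + starMu μ I F (Sum.inr ()) i j := by
    intro k
    induction k with
    | zero =>
      funext i j
      simp only [List.replicate_zero, List.flatten_nil, List.nil_append, List.map_cons,
        List.map_nil]
      show starMu μ I F (Sum.inr ()) i j = _
      rw [zero_nsmul, zero_add]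
    | succ k ih =>
      have step : (List.replicate (k+1) (Sum.inr () :: w.map Sum.inl)).flatten
          ++ [Sum.inr ()] = ((Sum.inr () :: w.map Sum.inl) ++
          ((List.replicate k (Sum.inr () :: w.map Sum.inl)).flatten ++ [Sum.inr ()]) :
            List (α ⊕ Unit)) := by
        rw [List.replicate_succ, List.flatten_cons, List.append_assoc]
      rw [step, List.map_append, prodL_append' _ _ (by simp) (by simp)]
      have blk : prodL ((Sum.inr () :: w.map Sum.inl).map (starMu μ I F)) =
          tmul (starMu μ I F (Sum.inr ())) (tlift (prodL (w.map μ))) := by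
        rw [List.map_cons, prodL_cons' _ _ (by simpa using hw)]
        congr 1
        rw [List.map_map]
        have h1 : (starMu μ I F) ∘ Sum.inl = tlift ∘ μ := rfl
        rw [h1, ← List.map_map, prodL_map_tlift _ hwmap]
      rw [blk, ih, tmul_cadd]
      funext i j
      simp only [EWE μ I F hI hF]
      rw [succ_nsmul, add_assoc]
  rw [key k, tnorm_cadd, tnorm_E μ I F hI hF, add_zero]
end
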